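/- Let φ = (1+√5)/2 and let X ⊂ S² be the 20-point vertex set of the regular dodecahedron inscribed in the unit sphere, consisting of the eight points (±1, ±1, ±1)/√3 together with all cyclic permutations of the coordinates of (0, ±1/φ, ±φ)/√3; its maximum pairwise inner product is α = √5/3. Then for every unit vector y ∈ S² with y ∉ X, there exists x ∈ X with ⟨x,y⟩ > √5/3; i.e., adjoining any new point of S² to X strictly increases the maximum pairwise inner product. -/

import Mathlib

open scoped RealInnerProductSpace

/-- The golden ratio `(1 + √5)/2`. -/
noncomputable def gr : ℝ := (1 + Real.sqrt 5) / 2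

/-- Vertex set of the regular dodecahedron inscribed in the unit sphere:
the eight points `(±1, ±1, ±1)/√3` together with all cyclic permutations of the
coordinates of `(0, ±1/φ, ±φ)/√3`. -/
noncomputable def dodecahedron : Set (EuclideanSpace ℝ (Fin 3)) :=
  {v | (∀ i, v i = (Real.sqrt 3)⁻¹ ∨ v i = -(Real.sqrt 3)⁻¹) ∨
    ∃ s t : ℝ, (s = 1 ∨ s = -1) ∧ (t = 1 ∨ t = -1) ∧
      ((v 0 = 0 ∧ v 1 = s * gr⁻¹ * (Real.sqrt 3)⁻¹ ∧ v 2 = t * gr * (Real.sqrt 3)⁻¹) ∨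
       (v 1 = 0 ∧ v 2 = s * gr⁻¹ * (Real.sqrt 3)⁻¹ ∧ v 0 = t * gr * (Real.sqrt 3)⁻¹) ∨
       (v 2 = 0 ∧ v 0 = s * gr⁻¹ * (Real.sqrt 3)⁻¹ ∧ v 1 = t * gr * (Real.sqrt 3)⁻¹))}

lemma h5' : Real.sqrt 5 * Real.sqrt 5 = 5 := Real.mul_self_sqrt (by norm_num)
lemma h3' : Real.sqrt 3 * Real.sqrt 3 = 3 := Real.mul_self_sqrt (by norm_num)
lemma s3pos : (0:ℝ) < Real.sqrt 3 := Real.sqrt_pos.2 (by norm_num)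
lemma s5lb : (2236/1000:ℝ) ≤ Real.sqrt 5 := by nlinarith [h5', Real.sqrt_nonneg 5]
lemma s5ub : Real.sqrt 5 ≤ 22361/10000 := by nlinarith [h5', Real.sqrt_nonneg 5]
lemma s3lb : (1732/1000:ℝ) ≤ Real.sqrt 3 := by nlinarith [h3', Real.sqrt_nonneg 3]
lemma hg2 : gr^2 = gr + 1 := by unfold gr; linear_combination h5'/4
lemma grpos : (0:ℝ) < gr := by unfold gr; nlinarith [Real.sqrt_nonneg 5]
lemma ginv : gr⁻¹ = gr - 1 := inv_eq_of_mul_eq_one_right (by linear_combination hg2)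
lemma gr_add : gr⁻¹ + gr = Real.sqrt 5 := by rw [ginv]; unfold gr; ring
lemma grlb : (1618/1000:ℝ) ≤ gr := by unfold gr; linarith [s5lb]
lemma ginv_lb : (618/1000:ℝ) ≤ gr⁻¹ := by rw [ginv]; linarith [grlb]
lemma ginv_nonneg : (0:ℝ) ≤ gr⁻¹ := le_trans (by norm_num) ginv_lb
lemma r2 : (Real.sqrt 3)⁻¹ * (Real.sqrt 3)⁻¹ = 1/3 := by rw [← mul_inv, h3']; norm_num
lemma rpos : (0:ℝ) < (Real.sqrt 3)⁻¹ := inv_pos.2 s3pos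
lemma q1 : gr^2 + (gr⁻¹)^2 = 3 := by rw [ginv]; linear_combination 2*hg2
lemma q2 : gr^2 - (gr⁻¹)^2 = Real.sqrt 5 := by rw [ginv]; unfold gr; ring

lemma inner3 (x y : EuclideanSpace ℝ (Fin 3)) : ⟪x, y⟫ = x 0 * y 0 + x 1 * y 1 + x 2 * y 2 := by
  simp [PiLp.inner_apply, Fin.sum_univ_three, RCLike.inner_apply]
  ring

lemma vec_ext (x y : EuclideanSpace ℝ (Fin 3)) (h0 : x 0 = y 0) (h1 : x 1 = y 1)
    (h2 : x 2 = y 2) : x = y := by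
  ext i
  fin_cases i
  · exact h0
  · exact h1
  · exact h2

lemma inner_le_abs (x y : EuclideanSpace ℝ (Fin 3)) :
    ⟪x, y⟫ ≤ |x 0| * |y 0| + |x 1| * |y 1| + |x 2| * |y 2| := by
  rw [inner3]
  have h : ∀ u v : ℝ, u * v ≤ |u| * |v| := fun u v => by
    rw [← abs_mul]; exact le_abs_self _
  have := h (x 0) (y 0); have := h (x 1) (y 1); have := h (x 2) (y 2); linarith

lemma abs_pm {u w : ℝ} (h : u = w ∨ u = -w) (hw : 0 ≤ w) : |u| = w := by
  rcases h with rfl | rfl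
  · exact abs_of_nonneg hw
  · rw [abs_neg]; exact abs_of_nonneg hw

lemma abs_sw {s w : ℝ} (hs : s = 1 ∨ s = -1) (hw : 0 ≤ w) : |s * w| = w := by
  rcases hs with rfl | rfl <;> simp [abs_of_nonneg hw]

lemma cube_mul_le {u v : ℝ} (hu : u = (Real.sqrt 3)⁻¹ ∨ u = -(Real.sqrt 3)⁻¹)
    (hv : v = (Real.sqrt 3)⁻¹ ∨ v = -(Real.sqrt 3)⁻¹) : u * v ≤ 1/3 := by
  rcases hu with rfl | rfl <;> rcases hv with rfl | rfl <;> nlinarith [r2]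

lemma cube_mul_ne {u v : ℝ} (hu : u = (Real.sqrt 3)⁻¹ ∨ u = -(Real.sqrt 3)⁻¹)
    (hv : v = (Real.sqrt 3)⁻¹ ∨ v = -(Real.sqrt 3)⁻¹) (h : u ≠ v) : u * v = -(1/3) := by
  rcases hu with rfl | rfl <;> rcases hv with rfl | rfl
  · exact absurd rfl h
  · linear_combination -r2
  · linear_combination -r2
  · exact absurd rfl h

lemma sum_cp : (Real.sqrt 3)⁻¹*(gr⁻¹*(Real.sqrt 3)⁻¹) + (Real.sqrt 3)⁻¹*(gr*(Real.sqrt 3)⁻¹)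
    = Real.sqrt 5 / 3 := by
  linear_combination (gr⁻¹+gr)*r2 + (1/3)*gr_add

lemma pp_cross : (gr*(Real.sqrt 3)⁻¹)*(gr⁻¹*(Real.sqrt 3)⁻¹) = 1/3 := by
  have hgg : gr * gr⁻¹ = 1 := mul_inv_cancel₀ grpos.ne'
  linear_combination gr*gr⁻¹*r2 + (1/3)*hgg

lemma eA : (gr⁻¹*(Real.sqrt 3)⁻¹)*(gr⁻¹*(Real.sqrt 3)⁻¹) = (gr⁻¹)^2/3 := by
  linear_combination (gr⁻¹)^2 * r2

lemma eB : (gr*(Real.sqrt 3)⁻¹)*(gr*(Real.sqrt 3)⁻¹) = gr^2/3 := by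
  linear_combination gr^2 * r2

lemma key (a b c : ℝ) (ha : 0 ≤ a) (hb : 0 ≤ b) (hc : 0 ≤ c) (h1 : a^2+b^2+c^2 = 1) :
    Real.sqrt 5 / Real.sqrt 3 < a + b + c ∨ Real.sqrt 5 / Real.sqrt 3 < gr⁻¹*b + gr*c ∨
    Real.sqrt 5 / Real.sqrt 3 < gr⁻¹*c + gr*a ∨ Real.sqrt 5 / Real.sqrt 3 < gr⁻¹*a + gr*b := by
  by_contra hcon
  push_neg at hcon
  obtain ⟨k1, k2, k3, k4⟩ := hcon
  have hm : Real.sqrt 5 / Real.sqrt 3 ≤ 12911/10000 := by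
    rw [div_le_iff₀ s3pos]; nlinarith [s5ub, s3lb]
  have g1 : (618/1000:ℝ)*b + (1618/1000)*c ≤ gr⁻¹*b + gr*c := by nlinarith [ginv_lb, grlb]
  have g2 : (618/1000:ℝ)*c + (1618/1000)*a ≤ gr⁻¹*c + gr*a := by nlinarith [ginv_lb, grlb]
  have g3 : (618/1000:ℝ)*a + (1618/1000)*b ≤ gr⁻¹*a + gr*b := by nlinarith [ginv_lb, grlb]
  have h2 : a+b+c ≤ 12911/10000 := le_trans k1 hm
  have h3 : (618/1000:ℝ)*b+(1618/1000)*c ≤ 12911/10000 := le_trans g1 (le_trans k2 hm)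
  have h4 : (618/1000:ℝ)*c+(1618/1000)*a ≤ 12911/10000 := le_trans g2 (le_trans k3 hm)
  have h5 : (618/1000:ℝ)*a+(1618/1000)*b ≤ 12911/10000 := le_trans g3 (le_trans k4 hm)
  nlinarith [mul_nonneg (sub_nonneg.2 h2) (sub_nonneg.2 h4),
    mul_nonneg (sub_nonneg.2 h3) (sub_nonneg.2 h5), mul_nonneg (sub_nonneg.2 h2) hc,
    mul_nonneg (sub_nonneg.2 h3) hc, mul_nonneg (sub_nonneg.2 h4) ha,
    mul_nonneg (sub_nonneg.2 h5) hb, mul_nonneg hb hc]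

lemma scale {X : ℝ} (h : Real.sqrt 5 / Real.sqrt 3 < X) :
    Real.sqrt 5 / 3 < (Real.sqrt 3)⁻¹ * X := by
  have e : (Real.sqrt 3)⁻¹ * (Real.sqrt 5 / Real.sqrt 3) = Real.sqrt 5 / 3 := by
    field_simp
    rw [Real.sq_sqrt (by norm_num : (0:ℝ) ≤ 3)]
  calc Real.sqrt 5 / 3 = (Real.sqrt 3)⁻¹ * (Real.sqrt 5 / Real.sqrt 3) := e.symm
    _ < (Real.sqrt 3)⁻¹ * X := mul_lt_mul_of_pos_left h rpos

set_option maxHeartbeats 1600000 in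
lemma ub {x y : EuclideanSpace ℝ (Fin 3)} (hx : x ∈ dodecahedron) (hy : y ∈ dodecahedron)
    (hxy : x ≠ y) : ⟪x, y⟫ ≤ Real.sqrt 5 / 3 := by
  simp only [dodecahedron, Set.mem_setOf_eq] at hx hy
  have hw1 : (0:ℝ) ≤ gr⁻¹ * (Real.sqrt 3)⁻¹ := mul_nonneg ginv_nonneg rpos.le
  have hw2 : (0:ℝ) ≤ gr * (Real.sqrt 3)⁻¹ := mul_nonneg grpos.le rpos.le
  rcases hx with hx | ⟨s, t, hs, ht, hx⟩
  · rcases hy with hy | ⟨s, t, hs, ht, hy⟩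
    · -- cube cube
      have hne : x 0 ≠ y 0 ∨ x 1 ≠ y 1 ∨ x 2 ≠ y 2 := by
        by_contra hno
        push_neg at hno
        exact hxy (vec_ext x y hno.1 hno.2.1 hno.2.2)
      rw [inner3]
      have t0 := cube_mul_le (hx 0) (hy 0)
      have t1 := cube_mul_le (hx 1) (hy 1)
      have t2 := cube_mul_le (hx 2) (hy 2)
      rcases hne with h | h | h
      · have := cube_mul_ne (hx 0) (hy 0) h; linarith [s5lb]
      · have := cube_mul_ne (hx 1) (hy 1) h; linarith [s5lb]
      · have := cube_mul_ne (hx 2) (hy 2) h; linarith [s5lb]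
    · -- cube x, perm y
      have f0 := abs_pm (hx 0) rpos.le
      have f1 := abs_pm (hx 1) rpos.le
      have f2 := abs_pm (hx 2) rpos.le
      have A1 : |s * gr⁻¹ * (Real.sqrt 3)⁻¹| = gr⁻¹ * (Real.sqrt 3)⁻¹ := by
        rw [mul_assoc]; exact abs_sw hs hw1
      have A2 : |t * gr * (Real.sqrt 3)⁻¹| = gr * (Real.sqrt 3)⁻¹ := by
        rw [mul_assoc]; exact abs_sw ht hw2
      refine le_trans (inner_le_abs x y) ?_
      rcases hy with ⟨e0, e1, e2⟩ | ⟨e0, e1, e2⟩ | ⟨e0, e1, e2⟩ <;>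
        rw [f0, f1, f2, e0, e1, e2] <;>
        simp only [A1, A2, abs_zero] <;> linarith [sum_cp]
  · rcases hy with hy | ⟨s2, t2, hs2, ht2, hy⟩
    · -- perm x, cube y
      have f0 := abs_pm (hy 0) rpos.le
      have f1 := abs_pm (hy 1) rpos.le
      have f2 := abs_pm (hy 2) rpos.le
      have A1 : |s * gr⁻¹ * (Real.sqrt 3)⁻¹| = gr⁻¹ * (Real.sqrt 3)⁻¹ := by
        rw [mul_assoc]; exact abs_sw hs hw1
      have A2 : |t * gr * (Real.sqrt 3)⁻¹| = gr * (Real.sqrt 3)⁻¹ := by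
        rw [mul_assoc]; exact abs_sw ht hw2
      refine le_trans (inner_le_abs x y) ?_
      rcases hx with ⟨e0, e1, e2⟩ | ⟨e0, e1, e2⟩ | ⟨e0, e1, e2⟩ <;>
        rw [f0, f1, f2, e0, e1, e2] <;>
        simp only [A1, A2, abs_zero] <;> linarith [sum_cp]
    · -- perm perm
      have A1 : |s * gr⁻¹ * (Real.sqrt 3)⁻¹| = gr⁻¹ * (Real.sqrt 3)⁻¹ := by
        rw [mul_assoc]; exact abs_sw hs hw1
      have A2 : |t * gr * (Real.sqrt 3)⁻¹| = gr * (Real.sqrt 3)⁻¹ := by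
        rw [mul_assoc]; exact abs_sw ht hw2
      have B1 : |s2 * gr⁻¹ * (Real.sqrt 3)⁻¹| = gr⁻¹ * (Real.sqrt 3)⁻¹ := by
        rw [mul_assoc]; exact abs_sw hs2 hw1
      have B2 : |t2 * gr * (Real.sqrt 3)⁻¹| = gr * (Real.sqrt 3)⁻¹ := by
        rw [mul_assoc]; exact abs_sw ht2 hw2
      obtain ⟨e0, e1, e2⟩ | ⟨e0, e1, e2⟩ | ⟨e0, e1, e2⟩ := hx <;>
        obtain ⟨f0, f1, f2⟩ | ⟨f0, f1, f2⟩ | ⟨f0, f1, f2⟩ := hy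
      · rw [inner3, e0, e1, e2, f0, f1, f2]
        rcases hs with rfl | rfl <;> rcases ht with rfl | rfl <;>
          rcases hs2 with rfl | rfl <;> rcases ht2 with rfl | rfl <;>
          first
            | (exact absurd
                (vec_ext x y (e0.trans f0.symm) (e1.trans f1.symm) (e2.trans f2.symm)) hxy)
            | linarith [eA, eB, q1, q2, s5lb]
      · refine le_trans (inner_le_abs x y) ?_
        rw [e0, e1, e2, f0, f1, f2]
        simp only [A1, A2, B1, B2, abs_zero]
        linarith [pp_cross, s5lb]
      · refine le_trans (inner_le_abs x y) ?_
        rw [e0, e1, e2, f0, f1, f2]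
        simp only [A1, A2, B1, B2, abs_zero]
        linarith [pp_cross, s5lb]
      · refine le_trans (inner_le_abs x y) ?_
        rw [e0, e1, e2, f0, f1, f2]
        simp only [A1, A2, B1, B2, abs_zero]
        linarith [pp_cross, s5lb]
      · rw [inner3, e0, e1, e2, f0, f1, f2]
        rcases hs with rfl | rfl <;> rcases ht with rfl | rfl <;>
          rcases hs2 with rfl | rfl <;> rcases ht2 with rfl | rfl <;>
          first
            | (exact absurd
                (vec_ext x y (e2.trans f2.symm) (e0.trans f0.symm) (e1.trans f1.symm)) hxy)
            | linarith [eA, eB, q1, q2, s5lb]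
      · refine le_trans (inner_le_abs x y) ?_
        rw [e0, e1, e2, f0, f1, f2]
        simp only [A1, A2, B1, B2, abs_zero]
        linarith [pp_cross, s5lb]
      · refine le_trans (inner_le_abs x y) ?_
        rw [e0, e1, e2, f0, f1, f2]
        simp only [A1, A2, B1, B2, abs_zero]
        linarith [pp_cross, s5lb]
      · refine le_trans (inner_le_abs x y) ?_
        rw [e0, e1, e2, f0, f1, f2]
        simp only [A1, A2, B1, B2, abs_zero]
        linarith [pp_cross, s5lb]
      · rw [inner3, e0, e1, e2, f0, f1, f2]
        rcases hs with rfl | rfl <;> rcases ht with rfl | rfl <;>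
          rcases hs2 with rfl | rfl <;> rcases ht2 with rfl | rfl <;>
          first
            | (exact absurd
                (vec_ext x y (e1.trans f1.symm) (e2.trans f2.symm) (e0.trans f0.symm)) hxy)
            | linarith [eA, eB, q1, q2, s5lb]

lemma sgnCases18 (u : ℝ) : ((if 0 ≤ u then (1:ℝ) else -1) = 1 ∨ (if 0 ≤ u then (1:ℝ) else -1) = -1) := by
  by_cases h : 0 ≤ u
  · exact Or.inl (if_pos h)
  · exact Or.inr (if_neg h)

lemma sgnMul18 (u : ℝ) : (if 0 ≤ u then (1:ℝ) else -1) * u = |u| := by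
  by_cases h : 0 ≤ u
  · rw [if_pos h, abs_of_nonneg h]; ring
  · rw [if_neg h, abs_of_neg (lt_of_not_ge h)]; ring

/-- The regular dodecahedron inscribed in the unit sphere has maximum pairwise inner product `α = Real.sqrt 5 / 3`,
and adjoining any new unit vector strictly increases the maximum pairwise inner product:
every unit vector `y ∉ X` has `⟪x, y⟫ > α` for some vertex `x`. -/
theorem stmt_18 :
    IsGreatest {r : ℝ | ∃ x ∈ dodecahedron, ∃ y ∈ dodecahedron, x ≠ y ∧ ⟪x, y⟫ = r} (Real.sqrt 5 / 3) ∧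
      ∀ y : EuclideanSpace ℝ (Fin 3), ‖y‖ = 1 → y ∉ dodecahedron →
        ∃ x ∈ dodecahedron, ⟪x, y⟫ > (Real.sqrt 5 / 3) := by
  refine ⟨⟨?_, ?_⟩, ?_⟩
  · -- membership
    refine ⟨(WithLp.toLp 2 (fun _ => (Real.sqrt 3)⁻¹) : EuclideanSpace ℝ (Fin 3)), Or.inl (fun i => Or.inl rfl),
      (WithLp.toLp 2 ![0, 1 * gr⁻¹ * (Real.sqrt 3)⁻¹, 1 * gr * (Real.sqrt 3)⁻¹] : EuclideanSpace ℝ (Fin 3)),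
      Or.inr ⟨1, 1, Or.inl rfl, Or.inl rfl, Or.inl ⟨rfl, rfl, rfl⟩⟩, ?_, ?_⟩
    · intro h
      have h0 : (Real.sqrt 3)⁻¹ = (0:ℝ) := congrFun (congrArg WithLp.ofLp h) 0
      exact absurd h0 rpos.ne'
    · simp only [inner3, PiLp.toLp_apply, Matrix.cons_val_zero, Matrix.cons_val_one, Matrix.head_cons,
        Matrix.cons_val_two, Matrix.tail_cons]
      linear_combination (gr⁻¹ + gr) * r2 + (1/3) * gr_add
  · -- upper bound
    rintro r ⟨x, hx, y, hy, hxy, rfl⟩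
    exact ub hx hy hxy
  · -- covering
    intro y hy _
    have hsum : Real.sqrt (∑ i, ‖y i‖^2) = 1 := by rw [← EuclideanSpace.norm_eq]; exact hy
    rw [Real.sqrt_eq_one] at hsum
    have hn : |y 0|^2 + |y 1|^2 + |y 2|^2 = 1 := by
      rw [sq_abs, sq_abs, sq_abs]
      simpa [Fin.sum_univ_three, Real.norm_eq_abs, sq_abs] using hsum
    rcases key (|y 0|) (|y 1|) (|y 2|) (abs_nonneg _) (abs_nonneg _) (abs_nonneg _) hn with
      hk | hk | hk | hk
    · -- cube point
      refine ⟨(WithLp.toLp 2 (fun i => (if 0 ≤ y i then (1:ℝ) else -1) * (Real.sqrt 3)⁻¹) :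
          EuclideanSpace ℝ (Fin 3)), Or.inl (fun i => ?_), ?_⟩
      · rcases sgnCases18 (y i) with h | h
        · left; show (if 0 ≤ y i then (1:ℝ) else -1) * (Real.sqrt 3)⁻¹ = _
          rw [h]; ring
        · right; show (if 0 ≤ y i then (1:ℝ) else -1) * (Real.sqrt 3)⁻¹ = _
          rw [h]; ring
      · have e : ∀ i : Fin 3,
            ((if 0 ≤ y i then (1:ℝ) else -1) * (Real.sqrt 3)⁻¹) * y i
              = (Real.sqrt 3)⁻¹ * |y i| := fun i => by
          rw [mul_comm (if 0 ≤ y i then (1:ℝ) else -1) (Real.sqrt 3)⁻¹, mul_assoc, sgnMul18]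
        simp only [inner3, PiLp.toLp_apply]
        have := scale hk
        linarith [e 0, e 1, e 2, scale hk]
    · -- perm point, type 0 : gr⁻¹ |y 1| + gr |y 2|
      refine ⟨(WithLp.toLp 2 ![0, (if 0 ≤ y 1 then (1:ℝ) else -1) * gr⁻¹ * (Real.sqrt 3)⁻¹,
          (if 0 ≤ y 2 then (1:ℝ) else -1) * gr * (Real.sqrt 3)⁻¹] : EuclideanSpace ℝ (Fin 3)),
        Or.inr ⟨_, _, sgnCases18 (y 1), sgnCases18 (y 2), Or.inl ⟨rfl, rfl, rfl⟩⟩, ?_⟩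
      simp only [inner3, PiLp.toLp_apply, Matrix.cons_val_zero, Matrix.cons_val_one, Matrix.head_cons,
        Matrix.cons_val_two, Matrix.tail_cons]
      have e1 : ((if 0 ≤ y 1 then (1:ℝ) else -1) * gr⁻¹ * (Real.sqrt 3)⁻¹) * y 1
          = (Real.sqrt 3)⁻¹ * (gr⁻¹ * |y 1|) := by
        rw [← sgnMul18 (y 1)]; ring
      have e2 : ((if 0 ≤ y 2 then (1:ℝ) else -1) * gr * (Real.sqrt 3)⁻¹) * y 2
          = (Real.sqrt 3)⁻¹ * (gr * |y 2|) := by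
        rw [← sgnMul18 (y 2)]; ring
      linarith [e1, e2, scale hk]
    · -- perm point, type 1 : gr⁻¹ |y 2| + gr |y 0|
      refine ⟨(WithLp.toLp 2 ![(if 0 ≤ y 0 then (1:ℝ) else -1) * gr * (Real.sqrt 3)⁻¹, 0,
          (if 0 ≤ y 2 then (1:ℝ) else -1) * gr⁻¹ * (Real.sqrt 3)⁻¹] : EuclideanSpace ℝ (Fin 3)),
        Or.inr ⟨_, _, sgnCases18 (y 2), sgnCases18 (y 0), Or.inr (Or.inl ⟨rfl, rfl, rfl⟩)⟩, ?_⟩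
      simp only [inner3, PiLp.toLp_apply, Matrix.cons_val_zero, Matrix.cons_val_one, Matrix.head_cons,
        Matrix.cons_val_two, Matrix.tail_cons]
      have e1 : ((if 0 ≤ y 2 then (1:ℝ) else -1) * gr⁻¹ * (Real.sqrt 3)⁻¹) * y 2
          = (Real.sqrt 3)⁻¹ * (gr⁻¹ * |y 2|) := by
        rw [← sgnMul18 (y 2)]; ring
      have e2 : ((if 0 ≤ y 0 then (1:ℝ) else -1) * gr * (Real.sqrt 3)⁻¹) * y 0
          = (Real.sqrt 3)⁻¹ * (gr * |y 0|) := by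
        rw [← sgnMul18 (y 0)]; ring
      linarith [e1, e2, scale hk]
    · -- perm point, type 2 : gr⁻¹ |y 0| + gr |y 1|
      refine ⟨(WithLp.toLp 2 ![(if 0 ≤ y 0 then (1:ℝ) else -1) * gr⁻¹ * (Real.sqrt 3)⁻¹,
          (if 0 ≤ y 1 then (1:ℝ) else -1) * gr * (Real.sqrt 3)⁻¹, 0] : EuclideanSpace ℝ (Fin 3)),
        Or.inr ⟨_, _, sgnCases18 (y 0), sgnCases18 (y 1), Or.inr (Or.inr ⟨rfl, rfl, rfl⟩)⟩, ?_⟩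
      simp only [inner3, PiLp.toLp_apply, Matrix.cons_val_zero, Matrix.cons_val_one, Matrix.head_cons,
        Matrix.cons_val_two, Matrix.tail_cons]
      have e1 : ((if 0 ≤ y 0 then (1:ℝ) else -1) * gr⁻¹ * (Real.sqrt 3)⁻¹) * y 0
          = (Real.sqrt 3)⁻¹ * (gr⁻¹ * |y 0|) := by
        rw [← sgnMul18 (y 0)]; ring
      have e2 : ((if 0 ≤ y 1 then (1:ℝ) else -1) * gr * (Real.sqrt 3)⁻¹) * y 1
          = (Real.sqrt 3)⁻¹ * (gr * |y 1|) := by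
        rw [← sgnMul18 (y 1)]; ring
      linarith [e1, e2, scale hk]
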